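/- Let n ≥ 1, let x ∈ ℝⁿ, and let μ > 0. Then the function u ↦ (1/2)·‖u − x‖₂² + μ·‖u‖₂ on ℝⁿ has a unique minimizer u*, given by the block soft-thresholding formula: u* = (max(‖x‖₂ − μ, 0)/‖x‖₂) · x if x ≠ 0, and u* = 0 if x = 0. In particular u* = 0 whenever ‖x‖₂ ≤ μ. -/

import Mathlib

/-- **Block soft thresholding is the proximal operator of the Euclidean norm.**
Let `n ≥ 1`, `x ∈ ℝⁿ` and `μ > 0`.  Then `u ↦ (1/2)‖u − x‖₂² + μ‖u‖₂` has a unique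
minimizer `u*`, given by `u* = (max(‖x‖₂ − μ, 0)/‖x‖₂) • x` if `x ≠ 0` and `u* = 0`
if `x = 0`; in particular `u* = 0` whenever `‖x‖₂ ≤ μ`. -/
theorem block_soft_thresholding_prox
    (n : ℕ) (hn : 1 ≤ n)
    (x : EuclideanSpace ℝ (Fin n)) (μ : ℝ) (hμ : 0 < μ)
    (f : EuclideanSpace ℝ (Fin n) → ℝ)
    (hf : ∀ u, f u = (1 / 2) * ‖u - x‖ ^ 2 + μ * ‖u‖)
    (ustar : EuclideanSpace ℝ (Fin n))
    (hzero : x = 0 → ustar = 0)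
    (hnonzero : x ≠ 0 → ustar = (max (‖x‖ - μ) 0 / ‖x‖) • x) :
    (∀ u, f ustar ≤ f u) ∧
    (∀ u, (∀ v, f u ≤ f v) → u = ustar) ∧
    (‖x‖ ≤ μ → ustar = 0) := by
  have hsmall : ‖x‖ ≤ μ → ustar = 0 := by
    intro hle
    by_cases hx : x = 0
    · exact hzero hx
    · rw [hnonzero hx, max_eq_right (by linarith), zero_div, zero_smul]
  have key : ∀ u, f ustar ≤ f u := by
    intro u
    rw [hf, hf]
    have hcs : inner ℝ u x ≤ ‖u‖ * ‖x‖ := real_inner_le_norm u x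
    have hexp : ‖u - x‖ ^ 2 = ‖u‖ ^ 2 - 2 * inner ℝ u x + ‖x‖ ^ 2 :=
      norm_sub_sq_real u x
    by_cases hle : ‖x‖ ≤ μ
    · rw [hsmall hle]
      have h0 : (0 : EuclideanSpace ℝ (Fin n)) - x = -x := by simp
      rw [h0, norm_neg, norm_zero]
      have hu : 0 ≤ ‖u‖ := norm_nonneg u
      nlinarith [norm_nonneg x]
    · push_neg at hle
      have hx : x ≠ 0 := by
        intro h; rw [h, norm_zero] at hle; linarith
      have hxpos : 0 < ‖x‖ := norm_pos_iff.mpr hx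
      set t : ℝ := (‖x‖ - μ) / ‖x‖ with ht
      have htmax : max (‖x‖ - μ) 0 = ‖x‖ - μ := max_eq_left (by linarith)
      have hust : ustar = t • x := by rw [hnonzero hx, htmax]
      have hnorm_ustar : ‖ustar‖ = ‖x‖ - μ := by
        rw [hust, norm_smul, Real.norm_eq_abs, abs_of_nonneg
          (div_nonneg (by linarith) hxpos.le), div_mul_cancel₀ _ hxpos.ne']
      have hdiff : ustar - x = (-(μ / ‖x‖)) • x := by
        rw [hust]
        rw [show (-(μ / ‖x‖)) = t - 1 by rw [ht, div_sub_one hxpos.ne']; ring]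
        rw [sub_smul, one_smul]
      have hnorm_diff : ‖ustar - x‖ = μ := by
        rw [hdiff, norm_smul, Real.norm_eq_abs, abs_neg, abs_of_nonneg
          (div_nonneg hμ.le hxpos.le), div_mul_cancel₀ _ hxpos.ne']
      rw [hnorm_diff, hnorm_ustar]
      have hu : 0 ≤ ‖u‖ := norm_nonneg u
      nlinarith [sq_nonneg (‖u‖ - ‖x‖ + μ)]
  refine ⟨key, ?_, hsmall⟩
  intro u hu
  by_contra hne
  have heq : f u = f ustar := le_antisymm (hu ustar) (key u)
  set m : EuclideanSpace ℝ (Fin n) := (1/2 : ℝ) • (u + ustar) with hm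
  have hmx : m - x = (1/2 : ℝ) • ((u - x) + (ustar - x)) := by
    rw [hm]; module
  have hpar : ‖(u - x) + (ustar - x)‖ ^ 2
      = 2 * (‖u - x‖ ^ 2 + ‖ustar - x‖ ^ 2) - ‖u - ustar‖ ^ 2 := by
    have := parallelogram_law_with_norm ℝ (u - x) (ustar - x)
    have h2 : (u - x) - (ustar - x) = u - ustar := by module
    rw [h2] at this
    linarith
  have hmx2 : ‖m - x‖ ^ 2 = (1/4) * (2 * (‖u - x‖ ^ 2 + ‖ustar - x‖ ^ 2)
      - ‖u - ustar‖ ^ 2) := by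
    rw [hmx, norm_smul, mul_pow, Real.norm_eq_abs, hpar]
    norm_num
  have hmn : ‖m‖ ≤ (1/2) * ‖u‖ + (1/2) * ‖ustar‖ := by
    rw [hm, smul_add]
    calc ‖(1/2 : ℝ) • u + (1/2 : ℝ) • ustar‖
        ≤ ‖(1/2 : ℝ) • u‖ + ‖(1/2 : ℝ) • ustar‖ := norm_add_le _ _
      _ = (1/2) * ‖u‖ + (1/2) * ‖ustar‖ := by
          rw [norm_smul, norm_smul, Real.norm_eq_abs,
            abs_of_pos (by norm_num : (0:ℝ) < 1/2)]
  have hfm : f m ≤ f ustar - (1/8) * ‖u - ustar‖ ^ 2 := by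
    rw [hf, hf]
    rw [hf, hf] at heq
    nlinarith [hmn, hmx2]
  have hd : u - ustar ≠ 0 := sub_ne_zero.mpr hne
  have hdpos : 0 < ‖u - ustar‖ := norm_pos_iff.mpr hd
  have := key m
  nlinarith [sq_nonneg ‖u - ustar‖, pow_pos hdpos 2]
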